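/- For all s, t ∈ [0,1], the limit as N → ∞ of N · (min(s,t) − st − Σ_{k=1}^{N} 2 sin(kπs) sin(kπt)/(k²π²)) equals 1/π² if s = t ∈ (0,1), and 0 otherwise. -/

import Mathlib

open Real Finset Filter Topology
open scoped Classical

noncomputable def cc (x : ℝ) (k : ℕ) : ℝ := 1 / (k:ℝ)^2 * Real.cos (2 * Real.pi * k * x)

lemma hasSum_cc {x : ℝ} (hx : x ∈ Set.Icc (0:ℝ) 1) :
    HasSum (cc x) (Real.pi^2 * (x^2 - x + 1/6)) := by
  have h := hasSum_one_div_nat_pow_mul_cos (k := 1) one_ne_zero hx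
  have e1 : (Polynomial.map (algebraMap ℚ ℝ) (Polynomial.bernoulli 2)).eval x
      = x^2 - x + 1/6 := by
    simp [Polynomial.bernoulli, Finset.sum_range_succ]
    norm_num [bernoulli]
    ring
  have e2 : ((-1:ℝ)) ^ (1 + 1) * (2 * Real.pi) ^ (2*1) / 2 / ((2*1).factorial : ℝ)
      = Real.pi ^ 2 := by norm_num [Nat.factorial]; ring
  rw [e1, e2] at h
  exact h
lemma tele_sum (g : ℕ → ℝ) (N : ℕ) : ∀ M, N ≤ M →
    ∑ k ∈ Finset.Ioc N M, (g k - g (k+1)) = g (N+1) - g (M+1) := by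
  intro M
  induction M with
  | zero => intro h; interval_cases N; simp
  | succ M ih =>
    intro h
    rcases Nat.lt_or_ge N (M+1) with h' | h'
    · have hNM : N ≤ M := by omega
      rw [Finset.sum_Ioc_succ_top hNM, ih hNM]
      ring
    · have : N = M + 1 := by omega
      subst this; simp

lemma abel_eq (f a : ℕ → ℝ) (N : ℕ) : ∀ M, N ≤ M →
    ∑ k ∈ Finset.Ioc N M, a k * f k
      = a M * (∑ k ∈ Finset.Ioc N M, f k)
        + ∑ k ∈ Finset.Ioc N (M-1), (a k - a (k+1)) * (∑ j ∈ Finset.Ioc N k, f j) := by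
  intro M
  induction M with
  | zero =>
    intro h; interval_cases N; simp
  | succ M ih =>
    intro h
    rcases Nat.lt_or_ge N (M+1) with h' | h'
    · have hNM : N ≤ M := by omega
      have e1 : ∑ k ∈ Finset.Ioc N (M+1), a k * f k
          = (∑ k ∈ Finset.Ioc N M, a k * f k) + a (M+1) * f (M+1) :=
        Finset.sum_Ioc_succ_top hNM _
      have e2 : ∑ k ∈ Finset.Ioc N (M+1), f k
          = (∑ k ∈ Finset.Ioc N M, f k) + f (M+1) := Finset.sum_Ioc_succ_top hNM _
      have e3 : ∑ k ∈ Finset.Ioc N (M+1-1), (a k - a (k+1)) * (∑ j ∈ Finset.Ioc N k, f j)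
          = (∑ k ∈ Finset.Ioc N (M-1), (a k - a (k+1)) * (∑ j ∈ Finset.Ioc N k, f j))
            + (a M - a (M+1)) * (∑ j ∈ Finset.Ioc N M, f j) := by
      
        rcases Nat.lt_or_ge N M with h'' | h''
        · have : M - 1 + 1 = M := by omega
          rw [show M + 1 - 1 = M from rfl, ← this, Finset.sum_Ioc_succ_top (by omega), this]
        · have hNM' : N = M := by omega
          subst hNM'
          simp
      rw [e1, e2, e3, ih hNM]
      ring
    · have : N = M + 1 := by omega
      subst this; simp

lemma abel_bound (f a : ℕ → ℝ) (N : ℕ) (C : ℝ)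
    (hG : ∀ m, |∑ k ∈ Finset.Ioc N m, f k| ≤ C)
    (ha0 : ∀ k, 0 ≤ a k) (ha : ∀ k, 1 ≤ k → a (k+1) ≤ a k) (M : ℕ) :
    |∑ k ∈ Finset.Ioc N M, a k * f k| ≤ C * a (N+1) := by
  have hC : 0 ≤ C := le_trans (abs_nonneg _) (hG N)
  rcases Nat.lt_or_ge M (N+1) with h | h
  · rw [Finset.Ioc_eq_empty (by omega)]
    simpa using mul_nonneg hC (ha0 (N+1))
  have hNM : N ≤ M := by omega
  rw [abel_eq f a N M hNM]
  calc |a M * (∑ k ∈ Finset.Ioc N M, f k)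
        + ∑ k ∈ Finset.Ioc N (M-1), (a k - a (k+1)) * (∑ j ∈ Finset.Ioc N k, f j)|
      ≤ a M * C + ∑ k ∈ Finset.Ioc N (M-1), (a k - a (k+1)) * C := by
        refine (abs_add_le _ _).trans (add_le_add ?_ ?_)
        · rw [abs_mul, abs_of_nonneg (ha0 M)]
          exact mul_le_mul_of_nonneg_left (hG M) (ha0 M)
        · refine (Finset.abs_sum_le_sum_abs _ _).trans (Finset.sum_le_sum ?_)
          intro k hk
          have hk1 : 1 ≤ k := by have := (Finset.mem_Ioc.mp hk).1; omega
          rw [abs_mul, abs_of_nonneg (sub_nonneg.mpr (ha k hk1))]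
          exact mul_le_mul_of_nonneg_left (hG k) (sub_nonneg.mpr (ha k hk1))
    _ = C * a (N+1) := by
        rw [← Finset.sum_mul, tele_sum a N (M-1) (by omega)]
        have : M - 1 + 1 = M := by omega
        rw [this]; ring
lemma cos_block_bound {x : ℝ} (hx : x ∈ Set.Ioo (0:ℝ) 1) :
    ∃ C : ℝ, ∀ N M : ℕ, |∑ k ∈ Finset.Ioc N M, Real.cos (2 * Real.pi * k * x)| ≤ C := by
  set z : ℂ := Complex.exp ((2 * Real.pi * x) * Complex.I) with hz
  have hz1 : z ≠ 1 := by
    rw [hz, Ne, Complex.exp_eq_one_iff]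
    rintro ⟨n, hn⟩
    have h2 : ((2 * Real.pi * x : ℝ) : ℂ) * Complex.I = (n * (2 * Real.pi) : ℝ) * Complex.I := by
      push_cast at hn ⊢
      rw [hn]; ring
    have := mul_right_cancel₀ Complex.I_ne_zero h2
    have hre : (2 * Real.pi * x) = n * (2 * Real.pi) := by exact_mod_cast this
    have hxn : x = n := by
      have hπ : (0:ℝ) < Real.pi := Real.pi_pos
      field_simp at hre
      nlinarith [hre]
    rcases hx with ⟨h0, h1⟩
    rw [hxn] at h0 h1
    have : (0:ℤ) < n := by exact_mod_cast h0
    have : (n:ℝ) < 1 := h1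
    have : n < 1 := by exact_mod_cast this
    omega
  have hnorm : ∀ k : ℕ, ‖z ^ k‖ = 1 := by
    intro k
    rw [hz, ← Complex.exp_nat_mul, Complex.norm_exp]
    simp
  refine ⟨2 / ‖z - 1‖, ?_⟩
  intro N M
  have hre : ∀ k : ℕ, Real.cos (2 * Real.pi * k * x) = (z ^ k).re := by
    intro k
    rw [hz, ← Complex.exp_nat_mul]
    have : (k:ℂ) * (2 * (Real.pi:ℂ) * (x:ℂ) * Complex.I) = ((2 * Real.pi * k * x : ℝ)) * Complex.I := by
      push_cast; ring
    rw [this, Complex.exp_ofReal_mul_I_re]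
  have hsum : ∑ k ∈ Finset.Ioc N M, Real.cos (2 * Real.pi * k * x)
      = (∑ k ∈ Finset.Ioc N M, z ^ k).re := by
    rw [Complex.re_sum]
    exact Finset.sum_congr rfl fun k _ => hre k
  rw [hsum]
  refine (Complex.abs_re_le_norm _).trans ?_
  rcases Nat.lt_or_ge M N with h | h
  · rw [Finset.Ioc_eq_empty (by omega)]
    simp [map_zero]
    positivity
  · have hIoc : Finset.Ioc N M = Finset.Ico (N+1) (M+1) := by
      ext k; simp [Nat.lt_succ_iff]
    rw [hIoc, geom_sum_Ico hz1 (by omega : N+1 ≤ M+1)]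
    rw [norm_div]
    have hpos : 0 < ‖z - 1‖ := norm_pos_iff.mpr (sub_ne_zero.mpr hz1)
    gcongr
    refine (norm_sub_le _ _).trans ?_
    have h1 := hnorm (M+1); have h2 := hnorm (N+1)
    rw [h1, h2]; norm_num
lemma block_eq (f : ℕ → ℝ) {N M : ℕ} (h : N ≤ M) :
    ∑ k ∈ Finset.Ioc N M, f k
      = ∑ k ∈ Finset.range (M+1), f k - ∑ k ∈ Finset.range (N+1), f k := by
  have hIoc : Finset.Ioc N M = Finset.Ico (N+1) (M+1) := by
    ext k; simp [Nat.lt_succ_iff]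
  rw [hIoc, eq_sub_iff_add_eq, add_comm, Finset.range_eq_Ico,
    Finset.sum_Ico_consecutive f (by omega) (by omega), Finset.range_eq_Ico]

lemma tail_repr {x S : ℝ} (h : HasSum (cc x) S) (N : ℕ) :
    Tendsto (fun M => ∑ k ∈ Finset.Ioc N M, cc x k) atTop
      (𝓝 (S - ∑ k ∈ Finset.range (N+1), cc x k)) := by
  have h1 : Tendsto (fun M : ℕ => ∑ k ∈ Finset.range (M+1), cc x k
      - ∑ k ∈ Finset.range (N+1), cc x k) atTop
      (𝓝 (S - ∑ k ∈ Finset.range (N+1), cc x k)) :=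
    ((h.tendsto_sum_nat).comp (tendsto_add_atTop_nat 1)).sub_const _
  refine h1.congr' ?_
  filter_upwards [eventually_ge_atTop N] with M hM
  exact (block_eq (cc x) hM).symm

lemma tail_zero {x : ℝ} (hx : x ∈ Set.Ioo (0:ℝ) 1) :
    Tendsto (fun N : ℕ => (N:ℝ) *
      (Real.pi^2 * (x^2 - x + 1/6) - ∑ k ∈ Finset.range (N+1), cc x k)) atTop (𝓝 0) := by
  obtain ⟨C, hC⟩ := cos_block_bound hx
  have hC0 : 0 ≤ C := le_trans (abs_nonneg _) (hC 0 0)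
  have hS := hasSum_cc (Set.mem_Icc_of_Ioo hx)
  have key : ∀ N : ℕ, |Real.pi^2 * (x^2 - x + 1/6) - ∑ k ∈ Finset.range (N+1), cc x k|
      ≤ C * (1 / ((N:ℝ)+1)^2) := by
    intro N
    have habs : Tendsto (fun M => |∑ k ∈ Finset.Ioc N M, cc x k|) atTop
        (𝓝 |Real.pi^2 * (x^2 - x + 1/6) - ∑ k ∈ Finset.range (N+1), cc x k|) :=
      (tail_repr hS N).abs
    refine le_of_tendsto habs (Eventually.of_forall fun M => ?_)
    have := abel_bound (fun k => Real.cos (2 * Real.pi * k * x)) (fun k => 1/(k:ℝ)^2) N C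
      (hC N) (fun k => by positivity)
      (fun k hk => by
        apply one_div_le_one_div_of_le (by positivity)
        have hk0 : (1:ℝ) ≤ (k:ℝ) := by exact_mod_cast hk
        push_cast
        nlinarith) M
    simpa [cc] using this
  have hb : ∀ N : ℕ, ‖(N:ℝ) * (Real.pi^2 * (x^2 - x + 1/6) - ∑ k ∈ Finset.range (N+1), cc x k)‖
      ≤ C * ((N:ℝ)/((N:ℝ)+1) * (1/((N:ℝ)+1))) := by
    intro N
    rw [Real.norm_eq_abs, abs_mul, Nat.abs_cast]
    calc (N:ℝ) * |Real.pi^2 * (x^2 - x + 1/6) - ∑ k ∈ Finset.range (N+1), cc x k|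
        ≤ (N:ℝ) * (C * (1 / ((N:ℝ)+1)^2)) := by
          exact mul_le_mul_of_nonneg_left (key N) (Nat.cast_nonneg N)
      _ = C * ((N:ℝ)/((N:ℝ)+1) * (1/((N:ℝ)+1))) := by
          field_simp
  refine squeeze_zero_norm hb ?_
  · have h1 : Tendsto (fun N : ℕ => (N:ℝ)/((N:ℝ)+1) * (1/((N:ℝ)+1))) atTop (𝓝 (1 * 0)) :=
      (tendsto_natCast_div_add_atTop (1:ℝ)).mul tendsto_one_div_add_atTop_nhds_zero_nat
    rw [one_mul] at h1
    simpa using h1.const_mul C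

lemma tail_one {x : ℝ} (hx : x = 0 ∨ x = 1) :
    Tendsto (fun N : ℕ => (N:ℝ) *
      (Real.pi^2 * (x^2 - x + 1/6) - ∑ k ∈ Finset.range (N+1), cc x k)) atTop (𝓝 1) := by
  have hcc : ∀ k : ℕ, cc x k = 1/(k:ℝ)^2 := by
    intro k
    rcases hx with h | h <;> subst h
    · simp [cc]
    · unfold cc
      rw [mul_one, show 2 * Real.pi * (k:ℝ) = (k:ℝ) * (2 * Real.pi) by ring,
        Real.cos_nat_mul_two_pi, mul_one]
  have hS := hasSum_cc (x := x) (by rcases hx with h | h <;> subst h <;> norm_num)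
  set S := Real.pi^2 * (x^2 - x + 1/6) with hSdef
  have lower : ∀ N : ℕ, 1/((N:ℝ)+1) ≤ S - ∑ k ∈ Finset.range (N+1), cc x k := by
    intro N
    have h1 : Tendsto (fun M : ℕ => 1/((N:ℝ)+1) - 1/((M:ℝ)+1)) atTop
        (𝓝 (1/((N:ℝ)+1) - 0)) :=
      (tendsto_const_nhds).sub tendsto_one_div_add_atTop_nhds_zero_nat
    rw [show (1:ℝ)/((N:ℝ)+1) = 1/((N:ℝ)+1) - 0 by ring]
    refine le_of_tendsto_of_tendsto' h1 (tail_repr hS N) fun M => ?_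
    rcases Nat.lt_or_ge M N with h | h
    · rw [Finset.Ioc_eq_empty (by omega), Finset.sum_empty]
      have : 1/((N:ℝ)+1) ≤ 1/((M:ℝ)+1) := by
        apply one_div_le_one_div_of_le (by positivity)
        have : (M:ℝ) ≤ N := by exact_mod_cast h.le
        linarith
      linarith
    · have htel := tele_sum (fun k => 1/((k:ℝ)+1-1)) N M h
      -- use g k = 1/k  (as real)
      have htel2 : ∑ k ∈ Finset.Ioc N M, (1/(k:ℝ) - 1/((k:ℝ)+1)) = 1/((N:ℝ)+1) - 1/((M:ℝ)+1) := by
        have := tele_sum (fun k => 1/(k:ℝ)) N M h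
        simp only [Nat.cast_add, Nat.cast_one] at this
        rw [← this]
      rw [← htel2]
      refine Finset.sum_le_sum fun k hk => ?_
      have hk1 : 1 ≤ k := by have := (Finset.mem_Ioc.mp hk).1; omega
      have hk0 : (1:ℝ) ≤ (k:ℝ) := by exact_mod_cast hk1
      rw [hcc k, div_sub_div _ _ (by positivity) (by positivity),
        div_le_div_iff₀ (by positivity) (by positivity)]
      nlinarith
  have upper : ∀ N : ℕ, 1 ≤ N → S - ∑ k ∈ Finset.range (N+1), cc x k ≤ 1/(N:ℝ) := by
    intro N hN
    refine le_of_tendsto (tail_repr hS N) (Eventually.of_forall fun M => ?_)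
    rcases Nat.lt_or_ge M N with h | h
    · rw [Finset.Ioc_eq_empty (by omega), Finset.sum_empty]
      have : (0:ℝ) < N := by exact_mod_cast hN
      positivity
    · have htel : ∑ k ∈ Finset.Ioc N M, (1/((k:ℝ)-1) - 1/(((k:ℝ)+1)-1))
          = 1/((N:ℝ)+1-1) - 1/((M:ℝ)+1-1) := by
        have := tele_sum (fun k => 1/((k:ℝ)-1)) N M h
        simp only [Nat.cast_add, Nat.cast_one] at this
        rw [← this]
      have step : ∑ k ∈ Finset.Ioc N M, cc x k
          ≤ ∑ k ∈ Finset.Ioc N M, (1/((k:ℝ)-1) - 1/(((k:ℝ)+1)-1)) := by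
        refine Finset.sum_le_sum fun k hk => ?_
        have hk2 : 2 ≤ k := by have := (Finset.mem_Ioc.mp hk).1; omega
        have hk0 : (2:ℝ) ≤ (k:ℝ) := by exact_mod_cast hk2
        rw [hcc k, div_sub_div _ _ (by nlinarith) (by nlinarith),
          div_le_div_iff₀ (by positivity) (by nlinarith)]
        nlinarith
      refine step.trans ?_
      rw [htel]
      have hN0 : (1:ℝ) ≤ (N:ℝ) := by exact_mod_cast hN
      have hM0 : (1:ℝ) ≤ (M:ℝ) := by
        have : 1 ≤ M := le_trans hN h
        exact_mod_cast this
      have hMpos : (0:ℝ) < (M:ℝ) := by linarith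
      have h2 : (0:ℝ) ≤ 1/(M:ℝ) := by positivity
      have e : (N:ℝ)+1-1 = (N:ℝ) := by ring
      have e2 : (M:ℝ)+1-1 = (M:ℝ) := by ring
      rw [e, e2]
      linarith
  refine tendsto_of_tendsto_of_tendsto_of_le_of_le'
    (g := fun N : ℕ => (N:ℝ)/((N:ℝ)+1)) (h := fun _ : ℕ => (1:ℝ))
    (tendsto_natCast_div_add_atTop (1:ℝ)) tendsto_const_nhds ?_ ?_
  · filter_upwards [eventually_ge_atTop 1] with N hN
    have hN0 : (0:ℝ) < (N:ℝ) := by exact_mod_cast hN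
    have := lower N
    rw [div_le_iff₀ (by positivity)]
    calc (N:ℝ) = (N:ℝ) * ((1/((N:ℝ)+1)) * ((N:ℝ)+1)) := by field_simp
      _ ≤ (N:ℝ) * ((S - ∑ k ∈ Finset.range (N+1), cc x k) * ((N:ℝ)+1)) := by
          apply mul_le_mul_of_nonneg_left _ hN0.le
          apply mul_le_mul_of_nonneg_right this (by positivity)
      _ = (N:ℝ) * (S - ∑ k ∈ Finset.range (N+1), cc x k) * ((N:ℝ)+1) := by ring
  · filter_upwards [eventually_ge_atTop 1] with N hN
    have hN0 : (0:ℝ) < (N:ℝ) := by exact_mod_cast hN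
    have := upper N hN
    calc (N:ℝ) * (S - ∑ k ∈ Finset.range (N+1), cc x k) ≤ (N:ℝ) * (1/(N:ℝ)) :=
          mul_le_mul_of_nonneg_left this hN0.le
      _ = 1 := by field_simp

/-- For all `s, t ∈ [0,1]`, the rescaled truncation error of Mercer's expansion of
the Brownian bridge covariance converges to `1/π²` if `s = t ∈ (0,1)` and to `0` otherwise. -/
theorem sin_fluctuation (s t : ℝ) (hs : s ∈ Set.Icc (0:ℝ) 1) (ht : t ∈ Set.Icc (0:ℝ) 1) :
    Tendsto (fun N : ℕ => (N : ℝ) *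
        (min s t - s * t - ∑ k ∈ Finset.Icc 1 N,
          2 * Real.sin (k * Real.pi * s) * Real.sin (k * Real.pi * t) /
            ((k : ℝ)^2 * Real.pi^2)))
      atTop (𝓝 (if s = t ∧ t ∈ Set.Ioo (0:ℝ) 1 then 1 / Real.pi^2 else 0)) := by
  obtain ⟨hs0, hs1⟩ := hs
  obtain ⟨ht0, ht1⟩ := ht
  have hπ : (0:ℝ) < Real.pi := Real.pi_pos
  set a : ℝ := |s - t| / 2 with hadef
  set b : ℝ := (s + t) / 2 with hbdef
  -- pointwise identity for the summands
  have hterm : ∀ k : ℕ, 2 * Real.sin (k * Real.pi * s) * Real.sin (k * Real.pi * t) /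
      ((k : ℝ)^2 * Real.pi^2) = (cc a k - cc b k) / Real.pi^2 := by
    intro k
    have hcosA : Real.cos (2 * Real.pi * k * a) = Real.cos ((k:ℝ) * Real.pi * (s - t)) := by
      rw [hadef]
      rcases abs_cases (s - t) with ⟨h, _⟩ | ⟨h, _⟩
      · rw [h]; ring_nf
      · rw [h, show 2 * Real.pi * (k:ℝ) * (-(s - t) / 2) = -((k:ℝ) * Real.pi * (s - t)) by ring,
          Real.cos_neg]
    have hcosB : Real.cos (2 * Real.pi * k * b) = Real.cos ((k:ℝ) * Real.pi * (s + t)) := by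
      rw [hbdef]; ring_nf
    have hkey : Real.cos ((k:ℝ) * Real.pi * (s - t)) - Real.cos ((k:ℝ) * Real.pi * (s + t))
        = 2 * Real.sin ((k:ℝ) * Real.pi * s) * Real.sin ((k:ℝ) * Real.pi * t) := by
      rw [Real.cos_sub_cos]
      rw [show ((k:ℝ) * Real.pi * (s - t) + (k:ℝ) * Real.pi * (s + t)) / 2
          = (k:ℝ) * Real.pi * s by ring,
        show ((k:ℝ) * Real.pi * (s - t) - (k:ℝ) * Real.pi * (s + t)) / 2
          = -((k:ℝ) * Real.pi * t) by ring, Real.sin_neg]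
      ring
    rcases Nat.eq_zero_or_pos k with hk | hk
    · subst hk
      simp [cc]
    · have hk0 : ((k:ℝ))^2 ≠ 0 := by positivity
      unfold cc
      rw [hcosA, hcosB, ← hkey]
      field_simp
      try ring
  -- the constant identity
  have ha01 : a ∈ Set.Icc (0:ℝ) 1 := by
    constructor
    · positivity
    · rw [hadef]
      rw [div_le_one (by norm_num)]
      rw [abs_le]; constructor <;> linarith
  have hb01 : b ∈ Set.Icc (0:ℝ) 1 := by
    constructor
    · rw [hbdef]; positivity
    · rw [hbdef]; linarith
  have hconst : min s t - s * t
      = (Real.pi^2 * (a^2 - a + 1/6) - Real.pi^2 * (b^2 - b + 1/6)) / Real.pi^2 := by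
    have hmin : min s t = (s + t - |s - t|) / 2 := by
      rcases le_total s t with h | h
      · rw [min_eq_left h, abs_of_nonpos (by linarith)]; ring
      · rw [min_eq_right h, abs_of_nonneg (by linarith)]; ring
    have habs2 : |s - t|^2 = (s - t)^2 := sq_abs _
    rw [hmin, hadef, hbdef]
    field_simp
    nlinarith [habs2]
  -- partial sums
  have hsum : ∀ N : ℕ, ∑ k ∈ Finset.Icc 1 N,
      2 * Real.sin (k * Real.pi * s) * Real.sin (k * Real.pi * t) / ((k : ℝ)^2 * Real.pi^2)
      = (∑ k ∈ Finset.range (N+1), cc a k - ∑ k ∈ Finset.range (N+1), cc b k) / Real.pi^2 := by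
    intro N
    have h1 : ∑ k ∈ Finset.range (N+1),
        2 * Real.sin (k * Real.pi * s) * Real.sin (k * Real.pi * t) / ((k : ℝ)^2 * Real.pi^2)
        = ∑ k ∈ Finset.Icc 1 N,
          2 * Real.sin (k * Real.pi * s) * Real.sin (k * Real.pi * t) / ((k : ℝ)^2 * Real.pi^2) := by
      rw [Finset.range_eq_Ico, Finset.sum_eq_sum_Ico_succ_bot (by omega)]
      rw [show Finset.Ico 1 (N+1) = Finset.Icc 1 N from Finset.Ico_add_one_right_eq_Icc 1 N]
      norm_num
    rw [← h1, Finset.sum_congr rfl fun k _ => hterm k, ← Finset.sum_sub_distrib,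
      ← Finset.sum_div]
  -- combine
  have combine : ∀ (La Lb : ℝ),
      Tendsto (fun N : ℕ => (N:ℝ) *
        (Real.pi^2 * (a^2 - a + 1/6) - ∑ k ∈ Finset.range (N+1), cc a k)) atTop (𝓝 La) →
      Tendsto (fun N : ℕ => (N:ℝ) *
        (Real.pi^2 * (b^2 - b + 1/6) - ∑ k ∈ Finset.range (N+1), cc b k)) atTop (𝓝 Lb) →
      Tendsto (fun N : ℕ => (N : ℝ) *
        (min s t - s * t - ∑ k ∈ Finset.Icc 1 N,
          2 * Real.sin (k * Real.pi * s) * Real.sin (k * Real.pi * t) /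
            ((k : ℝ)^2 * Real.pi^2))) atTop (𝓝 ((La - Lb) / Real.pi^2)) := by
    intro La Lb hA hB
    have := (hA.sub hB).div_const (Real.pi^2)
    refine this.congr fun N => ?_
    rw [hconst, hsum N]
    field_simp
    ring
  have habs_le : |s - t| ≤ 1 := by rw [abs_le]; constructor <;> linarith
  by_cases hif : s = t ∧ t ∈ Set.Ioo (0:ℝ) 1
  · obtain ⟨hst, ht01⟩ := hif
    rw [if_pos ⟨hst, ht01⟩]
    have hA : a = 0 := by rw [hadef, hst]; simp
    have hB : b = t := by rw [hbdef, hst]; ring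
    have tA := tail_one (x := a) (Or.inl hA)
    have tB := tail_zero (x := b) (by rw [hB]; exact ht01)
    have := combine 1 0 tA tB
    simpa using this
  · rw [if_neg hif]
    by_cases hst : s = t
    · -- t = 0 or t = 1
      have ht01 : t = 0 ∨ t = 1 := by
        by_contra h
        push_neg at h
        exact hif ⟨hst, lt_of_le_of_ne ht0 (Ne.symm h.1), lt_of_le_of_ne ht1 h.2⟩
      have hA : a = 0 := by rw [hadef, hst]; simp
      have hB : b = t := by rw [hbdef, hst]; ring
      have tA := tail_one (x := a) (Or.inl hA)
      have tB := tail_one (x := b) (by rw [hB]; exact ht01)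
      have := combine 1 1 tA tB
      simpa using this
    · have hne : s - t ≠ 0 := sub_ne_zero.mpr hst
      have hA : a ∈ Set.Ioo (0:ℝ) 1 := by
        constructor
        · rw [hadef]
          have := abs_pos.mpr hne
          positivity
        · rw [hadef]
          rw [div_lt_one (by norm_num)]
          linarith
      have hB : b ∈ Set.Ioo (0:ℝ) 1 := by
        constructor
        · rw [hbdef]
          rcases lt_or_ge 0 s with h | h
          · positivity
          · have hs' : s = 0 := le_antisymm h hs0
            have ht' : t ≠ 0 := fun h' => hst (by rw [hs', h'])
            have : 0 < t := lt_of_le_of_ne ht0 (Ne.symm ht')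
            rw [hs']; linarith
        · rw [hbdef]
          rcases lt_or_ge s 1 with h | h
          · rw [div_lt_one (by norm_num)]; linarith
          · have hs' : s = 1 := le_antisymm hs1 h
            have ht' : t ≠ 1 := fun h' => hst (by rw [hs', h'])
            have : t < 1 := lt_of_le_of_ne ht1 ht'
            rw [hs', div_lt_one (by norm_num)]; linarith
      have tA := tail_zero hA
      have tB := tail_zero hB
      have := combine 0 0 tA tB
      simpa using this
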